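/- Let R be an integral domain of Krull dimension 1. Then every parameter sequence on R has length exactly 1 and consists of a nonzero nonunit, hence is a regular sequence; therefore R is Cohen-Macaulay. -/

import Mathlib

/-- The natural map between localizations of a module at powers of two elements
`a ∣ b`, sending `m/1` to `m/1`. -/

noncomputable def cechLoc {R : Type*} [CommRing R] {M : Type*} [AddCommGroup M] [Module R M]
    (a b : R) (hab : a ∣ b) :
    LocalizedModule (Submonoid.powers a) M →ₗ[R] LocalizedModule (Submonoid.powers b) M :=
  LocalizedModule.lift _ (LocalizedModule.mkLinearMap (Submonoid.powers b) M) (by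
    rintro ⟨s, n, rfl⟩
    obtain ⟨c, rfl⟩ := hab
    set f := algebraMap R (Module.End R (LocalizedModule (Submonoid.powers (a * c)) M)) with hf
    obtain ⟨u, hu⟩ := IsLocalizedModule.map_units
      (LocalizedModule.mkLinearMap (Submonoid.powers (a * c)) M)
      (⟨(a * c) ^ n, n, rfl⟩ : Submonoid.powers (a * c))
    have hcomm : Commute (f (a ^ n)) ↑u := by
      have : Commute (f (a ^ n)) (f ((a * c) ^ n)) := by
        simp only [Commute, SemiconjBy, ← map_mul, mul_comm]
      rwa [← hu] at this
    refine ⟨⟨f (a ^ n), f (c ^ n) * ↑u⁻¹, ?_, ?_⟩, rfl⟩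
    · rw [← mul_assoc, ← map_mul, ← mul_pow, ← hu]
      exact u.mul_inv
    · rw [mul_assoc, ← (hcomm.units_inv_right).eq, ← mul_assoc, ← map_mul]
      have : c ^ n * a ^ n = (a * c) ^ n := by ring
      rw [this, ← hu]
      exact u.mul_inv)

open scoped BigOperators
open Classical

noncomputable section

universe u
variable {R : Type u} [CommRing R]

/-- Degree `i` term of the Čech complex of the sequence `x` with coefficients in `M`:
the product over `i`-element subsets `t` of the index set of the localization of `M`
at the product of the `x j` for `j ∈ t`. -/
noncomputable abbrev CechC {ℓ : ℕ} (x : Fin ℓ → R) (M : Type*) [AddCommGroup M] [Module R M]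
    (i : ℕ) : Type _ :=
  ∀ t : {t : Finset (Fin ℓ) // t.card = i}, LocalizedModule (Submonoid.powers (∏ j ∈ t.1, x j)) M

/-- The Čech differential `C^i → C^{i+1}`: the alternating sum of the further-localization
maps. -/
noncomputable def cechD {ℓ : ℕ} (x : Fin ℓ → R) (M : Type*) [AddCommGroup M] [Module R M]
    (i : ℕ) : CechC x M i →ₗ[R] CechC x M (i + 1) where
  toFun m t := ∑ j ∈ (t.1).attach,
    ((-1 : ℤ) ^ ((t.1.filter (· < j.1)).card)) •
      cechLoc (∏ k ∈ t.1.erase j.1, x k) (∏ k ∈ t.1, x k)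
        (Finset.prod_dvd_prod_of_subset _ _ _ (Finset.erase_subset _ _))
        (m ⟨t.1.erase j.1, by rw [Finset.card_erase_of_mem j.2, t.2]; omega⟩)
  map_add' := by
    intro a b
    funext t
    simp [Pi.add_apply, map_add, smul_add, Finset.sum_add_distrib]
    rw [← Finset.sum_add_distrib]
    exact Finset.sum_congr rfl (fun j _ => by first | exact zsmul_add _ _ _ | rw [zsmul_add] | exact (smul_add _ _ _ :))
  map_smul' := by
    intro r a
    funext t
    simp [Pi.smul_apply, map_smul, Finset.smul_sum, smul_comm r]

/-- The submodule of Čech coboundaries in degree `i`. -/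
noncomputable def cechPrevRange {ℓ : ℕ} (x : Fin ℓ → R) (M : Type*) [AddCommGroup M]
    [Module R M] : (i : ℕ) → Submodule R (CechC x M i)
  | 0 => ⊥
  | (i + 1) => LinearMap.range (cechD x M i)

/-- The `i`-th Čech cohomology of `M` with respect to the sequence `x`:
cocycles modulo coboundaries. -/
noncomputable abbrev CechH {ℓ : ℕ} (x : Fin ℓ → R) (M : Type*) [AddCommGroup M] [Module R M]
    (i : ℕ) : Type _ :=
  LinearMap.ker (cechD x M i) ⧸
    (cechPrevRange x M i).comap (LinearMap.ker (cechD x M i)).subtype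


/-- Degree `i` term of the Koszul complex on `ℓ` elements: free module indexed by
`i`-element subsets of the index set. -/
abbrev KoszulC (R : Type*) [CommRing R] (ℓ i : ℕ) : Type _ :=
  {t : Finset (Fin ℓ) // t.card = i} → R

/-- The Koszul differential `K_{i+1} → K_i` for the sequence `x^k = x_1^k, ..., x_ℓ^k`. -/
noncomputable def koszulD {ℓ : ℕ} (x : Fin ℓ → R) (k : ℕ) (i : ℕ) :
    KoszulC R ℓ (i + 1) →ₗ[R] KoszulC R ℓ i where
  toFun m s := ∑ j ∈ (s.1ᶜ).attach,
    ((-1 : ℤ) ^ ((s.1.filter (· < j.1)).card)) •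
      ((x j.1 ^ k) * m ⟨insert j.1 s.1, by
        rw [Finset.card_insert_of_notMem (Finset.mem_compl.mp j.2), s.2]⟩)
  map_add' := by
    intro a b
    funext s
    simp [mul_add, smul_add, Finset.sum_add_distrib]
  map_smul' := by
    intro r a
    funext s
    simp [Finset.mul_sum, mul_smul_comm, mul_left_comm]
  
/-- The standard transition chain map `K(x^m) → K(x^n)` (for `n ≤ m`) in degree `i`:
multiplication on the component indexed by `t` by `∏_{j ∈ t} x_j^{m-n}`. -/
noncomputable def koszulTr {ℓ : ℕ} (x : Fin ℓ → R) (m n i : ℕ) :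
    KoszulC R ℓ i →ₗ[R] KoszulC R ℓ i where
  toFun z t := (∏ j ∈ t.1, x j ^ (m - n)) * z t
  map_add' := by intro a b; funext t; simp [mul_add]
  map_smul' := by intro r a; funext t; simp; ring

/-- A finite sequence `x` is weakly proregular if for each `n` there is `m ≥ n` such that
the transition maps `H_i(x^m; R) → H_i(x^n; R)` on Koszul homology vanish for all `i ≥ 1`;
equivalently, the transition image of every cycle is a boundary. -/
def WeaklyProregular {ℓ : ℕ} (x : Fin ℓ → R) : Prop :=
  ∀ n : ℕ, 1 ≤ n → ∃ m, n ≤ m ∧ ∀ i : ℕ, ∀ z : KoszulC R ℓ (i + 1),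
    koszulD x m i z = 0 →
      ∃ b : KoszulC R ℓ (i + 1 + 1), koszulD x n (i + 1) b = koszulTr x m n (i + 1) z

/-- The height of an ideal: the infimum of the heights of the primes containing it. -/
noncomputable def idealHeight (I : Ideal R) : ℕ∞ :=
  ⨅ p : {p : PrimeSpectrum R // I ≤ p.asIdeal}, Order.height p.1


/-- A finite sequence `x` (given as a list `l`) is a parameter sequence on `R` if it is
weakly proregular, generates a proper ideal, and the localized top Čech cohomology
`H^{ℓ(x)}_x(R)_p` is nonzero for every prime `p` containing `(x)R`. -/
def IsParamSeq (l : List R) : Prop :=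
  WeaklyProregular l.get ∧ Ideal.span {a | a ∈ l} ≠ ⊤ ∧
    ∀ p : PrimeSpectrum R, Ideal.span {a | a ∈ l} ≤ p.asIdeal →
      Nontrivial (LocalizedModule p.asIdeal.primeCompl (CechH l.get R l.length))

/-- A strong parameter sequence: every initial segment is a parameter sequence. -/
def IsStrongParamSeq (l : List R) : Prop :=
  ∀ i : ℕ, i ≤ l.length → IsParamSeq (l.take i)


/-- `PossiblyImproperRegular R l N`: the list `l` is a possibly improper regular sequence on
the `R`-module `N`. -/
def PossiblyImproperRegular (R : Type u) [CommRing R] :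
    List R → (N : Type u) → [inst : AddCommGroup N] → [inst2 : Module R N] → Prop
  | [], _, _, _ => True
  | a :: as, N, _, _ => (∀ m : N, a • m = 0 → m = 0) ∧
      PossiblyImproperRegular R as (N ⧸ (Ideal.span {a} • (⊤ : Submodule R N)))

variable (R) in
/-- The list `l` is a regular sequence on the ring `R`. -/
def IsRegularSeq (l : List R) : Prop :=
  PossiblyImproperRegular R l R ∧ Ideal.span {a | a ∈ l} ≠ ⊤

namespace CMaux

theorem exists_mk {R : Type*} [CommRing R] {M : Type*} [AddCommGroup M] [Module R M]
    {S : Submonoid R} (u : LocalizedModule S M) :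
    ∃ (m : M) (s : S), u = LocalizedModule.mk m s := by
  induction u using LocalizedModule.induction_on with
  | _ m s => exact ⟨m, s, rfl⟩

theorem subsingleton_locMod {R : Type*} [CommRing R] (S : Submonoid R) (M : Type*)
    [AddCommGroup M] [Module R M] (h : Subsingleton M) :
    Subsingleton (LocalizedModule S M) := by
  constructor
  intro a b
  obtain ⟨m, s, rfl⟩ := exists_mk a
  obtain ⟨m', s', rfl⟩ := exists_mk b
  rw [LocalizedModule.mk_eq]
  exact ⟨1, Subsingleton.elim _ _⟩

theorem subsingleton_locMod_zero {R : Type*} [CommRing R] (S : Submonoid R) (M : Type*)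
    [AddCommGroup M] [Module R M] (h0 : (0 : R) ∈ S) :
    Subsingleton (LocalizedModule S M) := by
  constructor
  intro a b
  obtain ⟨m, s, rfl⟩ := exists_mk a
  obtain ⟨m', s', rfl⟩ := exists_mk b
  rw [LocalizedModule.mk_eq]
  refine ⟨⟨0, h0⟩, ?_⟩
  simp [Submonoid.smul_def]

theorem cechLoc_mk_one {R : Type*} [CommRing R] {M : Type*} [AddCommGroup M] [Module R M]
    (a b : R) (hab : a ∣ b) (m : M) :
    cechLoc (M := M) a b hab (LocalizedModule.mk m 1) = LocalizedModule.mk m 1 := by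
  unfold cechLoc
  rw [← LocalizedModule.mkLinearMap_apply, ← LinearMap.comp_apply, LocalizedModule.lift_comp]
  rw [LocalizedModule.mkLinearMap_apply]

theorem smul_injective_of_mem {R : Type*} [CommRing R] {M : Type*} [AddCommGroup M]
    [Module R M] (S : Submonoid R) (a : R) (ha : ∃ c, a * c ∈ S) :
    Function.Injective (fun u : LocalizedModule S M => a • u) := by
  obtain ⟨c, hc⟩ := ha
  intro u u' h
  simp only at h
  have h2 : (⟨a * c, hc⟩ : S) • u = (⟨a * c, hc⟩ : S) • u' := by
    simp only [Submonoid.smul_def, mul_comm a c, mul_smul, h]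
  exact IsLocalizedModule.smul_injective (LocalizedModule.mkLinearMap S M) ⟨a * c, hc⟩ h2

end CMaux
namespace CMaux

theorem cechLoc_smul_eq {R : Type*} [CommRing R] {M : Type*} [AddCommGroup M] [Module R M]
    (a b : R) (hab : a ∣ b) (m : M) (K : ℕ) :
    a ^ K • cechLoc (M := M) a b hab (LocalizedModule.mk m ⟨a ^ K, (Submonoid.mem_powers_iff _ _).mpr ⟨K, rfl⟩⟩)
      = LocalizedModule.mk m 1 := by
  have h1 : (a : R) ^ K • LocalizedModule.mk m (⟨a ^ K, (Submonoid.mem_powers_iff _ _).mpr ⟨K, rfl⟩⟩ : Submonoid.powers a)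
      = LocalizedModule.mk m 1 := by
    rw [LocalizedModule.smul'_mk]
    exact LocalizedModule.mk_cancel ⟨a ^ K, (Submonoid.mem_powers_iff _ _).mpr ⟨K, rfl⟩⟩ m
  rw [← map_smul, h1, cechLoc_mk_one]

end CMaux
namespace CMaux

theorem subsingleton_cechC_top {R : Type u} [CommRing R] (ℓ : ℕ) (x : Fin ℓ → R)
    (j : Fin ℓ) (hj : x j = 0) : Subsingleton (CechC x R ℓ) := by
  have key : ∀ t : {t : Finset (Fin ℓ) // t.card = ℓ},
      Subsingleton (LocalizedModule (Submonoid.powers (∏ k ∈ t.1, x k)) R) := by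
    intro t
    have ht : t.1 = Finset.univ := by
      apply Finset.eq_univ_of_card
      rw [t.2, Fintype.card_fin]
    have hz : (∏ k ∈ t.1, x k) = 0 := by
      rw [ht]
      exact Finset.prod_eq_zero (Finset.mem_univ j) hj
    apply subsingleton_locMod_zero
    exact ⟨1, by simp [hz]⟩
  constructor
  intro a b
  funext t
  exact (key t).elim _ _

theorem subsingleton_cechH {R : Type u} [CommRing R] {ℓ : ℕ} (x : Fin ℓ → R) (i : ℕ)
    (h : Subsingleton (CechC x R i)) : Subsingleton (CechH x R i) := by
  haveI : Subsingleton (LinearMap.ker (cechD x R i)) :=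
    ⟨fun a b => Subtype.ext (h.elim _ _)⟩
  constructor
  intro a b
  obtain ⟨a, rfl⟩ := Submodule.Quotient.mk_surjective _ a
  obtain ⟨b, rfl⟩ := Submodule.Quotient.mk_surjective _ b
  exact congrArg _ (Subsingleton.elim a b)

theorem dim_one_aux {R : Type u} [CommRing R] [IsDomain R] (h1 : ringKrullDim R = 1)
    (p : Ideal R) (hp : p.IsPrime) (x0 x1 : R) (hx0 : x0 ≠ 0) (hx1p : x1 ∈ p) (n : ℕ) :
    ∃ s ∉ p, ∃ t c, s * x1 ^ t = c * x0 ^ n := by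
  by_contra hcon
  push_neg at hcon
  set T : Submonoid R :=
    { carrier := {r | ∃ s ∉ p, ∃ t : ℕ, r = s * x1 ^ t}
      mul_mem' := by
        rintro r r' ⟨s, hs, t, rfl⟩ ⟨s', hs', t', rfl⟩
        refine ⟨s * s', fun hmem => ?_, t + t', by ring⟩
        rcases hp.mem_or_mem hmem with h | h
        exacts [hs h, hs' h]
      one_mem' := ⟨1, (Ideal.ne_top_iff_one p).mp hp.ne_top, 0, by ring⟩ } with hT
  have hdisj : Disjoint ((Ideal.span {x0 ^ n} : Ideal R) : Set R) (T : Set R) := by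
    rw [Set.disjoint_left]
    rintro r hrI ⟨s, hs, t, rfl⟩
    have hrI' : s * x1 ^ t ∈ Ideal.span {x0 ^ n} := hrI
    obtain ⟨c, hc⟩ := Ideal.mem_span_singleton.mp hrI'
    exact hcon s hs t c (by rw [hc]; ring)
  obtain ⟨q, hq, hle, hqdisj⟩ := Ideal.exists_le_prime_disjoint _ T hdisj
  have hx0q : x0 ∈ q := hq.mem_of_pow_mem n (hle (Ideal.subset_span rfl))
  have hqp : q ≤ p := by
    intro r hr
    by_contra hrp
    exact Set.disjoint_left.mp hqdisj hr ⟨r, hrp, 0, by ring⟩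
  have hx1q : x1 ∉ q := fun h =>
    Set.disjoint_left.mp hqdisj h ⟨1, (Ideal.ne_top_iff_one p).mp hp.ne_top, 1, by ring⟩
  -- build a chain of primes of length 2
  let P0 : PrimeSpectrum R := ⟨⊥, Ideal.bot_prime⟩
  let P1 : PrimeSpectrum R := ⟨q, hq⟩
  let P2 : PrimeSpectrum R := ⟨p, hp⟩
  have h01 : P0 < P1 := by
    refine lt_of_le_of_ne bot_le (fun h => ?_)
    have : q = ⊥ := congrArg PrimeSpectrum.asIdeal h.symm
    exact hx0 (by simpa [this] using hx0q)
  have h12 : P1 < P2 := by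
    refine lt_of_le_of_ne hqp (fun h => ?_)
    exact hx1q (by rw [show q = p from congrArg PrimeSpectrum.asIdeal h]; exact hx1p)
  let c : LTSeries (PrimeSpectrum R) :=
    ⟨2, ![P0, P1, P2], by
      intro i
      fin_cases i
      · exact h01
      · exact h12⟩
  have hlen := Order.LTSeries.length_le_krullDim c
  have h1' : Order.krullDim (PrimeSpectrum R) = 1 := h1
  rw [h1'] at hlen
  have hno : ¬ (((2 : ℕ) : WithBot ℕ∞) ≤ 1) := by
    rw [show ((1 : WithBot ℕ∞)) = ((1 : ℕ) : WithBot ℕ∞) from rfl, Nat.cast_le]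
    omega
  exact hno hlen

end CMaux
namespace CMaux

set_option synthInstance.maxHeartbeats 1000000 in
set_option maxHeartbeats 2000000 in
theorem main_subsingleton {R : Type u} [CommRing R] [IsDomain R] (h1 : ringKrullDim R = 1)
    (ℓ : ℕ) (hℓ : 2 ≤ ℓ) (x : Fin ℓ → R) (p : PrimeSpectrum R)
    (hxp : ∀ j, x j ∈ p.asIdeal) :
    Subsingleton (LocalizedModule p.asIdeal.primeCompl (CechH x R ℓ)) := by
  obtain ⟨k, rfl⟩ : ∃ k, ℓ = k + 2 := ⟨ℓ - 2, by omega⟩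
  by_cases hx0 : x 0 = 0
  · exact subsingleton_locMod _ _ (subsingleton_cechH _ _ (subsingleton_cechC_top _ x 0 hx0))
  have key : ∀ h : CechH x R (k + 2), ∃ s : p.asIdeal.primeCompl, (s : R) • h = 0 := by
    intro h
    obtain ⟨z, rfl⟩ := Submodule.Quotient.mk_surjective _ h
    obtain ⟨r, sc, hval⟩ := exists_mk ((z : CechC x R (k + 2)) ⟨Finset.univ, by simp⟩)
    obtain ⟨n, hn⟩ := sc.2
    obtain ⟨s, hs, t, c, hst⟩ := dim_one_aux h1 p.asIdeal p.2 (x 0) (x 1) hx0 (hxp 1) n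
    refine ⟨⟨s, hs⟩, ?_⟩
    have h1ne0 : (1 : Fin (k+2)) ≠ 0 := Fin.ne_of_val_ne (by simp)
    have hcard0 : (Finset.univ.erase (0 : Fin (k+2))).card = k + 1 := by
      rw [Finset.card_erase_of_mem (Finset.mem_univ 0), Finset.card_univ, Fintype.card_fin]
      omega
    set w0 : R := ∏ j ∈ Finset.univ.erase (0 : Fin (k+2)), x j with hw0def
    set w1 : R := ∏ j ∈ (Finset.univ.erase (0 : Fin (k+2))).erase 1, x j with hw1def
    have hww : (∏ j ∈ (Finset.univ : Finset (Fin (k+2))), x j) = x 0 * w0 :=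
      (Finset.mul_prod_erase _ _ (Finset.mem_univ 0)).symm
    have hw01 : w0 = x 1 * w1 :=
      (Finset.mul_prod_erase _ _ (Finset.mem_erase.mpr ⟨h1ne0, Finset.mem_univ 1⟩)).symm
    have hn' : (∏ j ∈ (Finset.univ : Finset (Fin (k+2))), x j) ^ n = (sc : R) := hn
    rw [show ((⟨s, hs⟩ : p.asIdeal.primeCompl) : R) • (Submodule.Quotient.mk z)
        = Submodule.Quotient.mk (s • z) from (Submodule.Quotient.mk_smul _ _ _).symm]
    rw [Submodule.Quotient.mk_eq_zero]
    rw [Submodule.mem_comap]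
    show _ ∈ LinearMap.range (cechD x R (k + 1))
    rw [LinearMap.mem_range]
    refine ⟨Pi.single ⟨Finset.univ.erase 0, hcard0⟩
      (LocalizedModule.mk (c * w1 ^ t * r) ⟨w0 ^ (n + t), (Submonoid.mem_powers_iff _ _).mpr ⟨n + t, rfl⟩⟩), ?_⟩
    funext tt
    obtain ⟨tt, htt⟩ := tt
    have httu : tt = Finset.univ := by
      apply Finset.eq_univ_of_card; rw [htt, Fintype.card_fin]
    subst httu
    have hvalh : (z : CechC x R (k+2)) ⟨Finset.univ, htt⟩ = LocalizedModule.mk r sc := hval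
    have hsz : ((LinearMap.ker (cechD x R (k+2))).subtype (s • z)) ⟨Finset.univ, htt⟩
        = s • LocalizedModule.mk r sc := by
      rw [Submodule.subtype_apply, Submodule.coe_smul, Pi.smul_apply, hvalh]
    rw [hsz]
    simp only [cechD, LinearMap.coe_mk, AddHom.coe_mk, Submodule.coe_subtype,
      SetLike.val_smul, Pi.smul_apply]
    have hblock : ∀ jj ∈ (Finset.univ : Finset (Fin (k+2))).attach,
        jj ≠ (⟨0, Finset.mem_univ 0⟩ : {a // a ∈ (Finset.univ : Finset (Fin (k+2)))}) →
        ((-1 : ℤ) ^ ((Finset.univ.filter (· < jj.1)).card)) •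
          cechLoc (M := R) (∏ m ∈ Finset.univ.erase jj.1, x m) (∏ m ∈ Finset.univ, x m)
            (Finset.prod_dvd_prod_of_subset _ _ _ (Finset.erase_subset _ _))
            ((Pi.single (⟨Finset.univ.erase 0, hcard0⟩ : {t : Finset (Fin (k+2)) // t.card = k+1})
              (LocalizedModule.mk (c * w1 ^ t * r) ⟨w0 ^ (n + t), (Submonoid.mem_powers_iff _ _).mpr ⟨n + t, rfl⟩⟩) : CechC x R (k+1))
              ⟨Finset.univ.erase jj.1, by
                rw [Finset.card_erase_of_mem (Finset.mem_univ _), Finset.card_univ,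
                  Fintype.card_fin]; omega⟩) = 0 := by
      intro jj hjj hne
      have hne0 : (jj : Fin (k+2)) ≠ 0 := fun h => hne (Subtype.ext h)
      rw [Pi.single_eq_of_ne ?hneq, map_zero]
      exact zsmul_zero _
      case hneq =>
        intro hEq
        have hEq' : Finset.univ.erase (jj : Fin (k+2)) = Finset.univ.erase 0 :=
          congrArg Subtype.val hEq
        have h0mem : (0 : Fin (k+2)) ∈ Finset.univ.erase (jj : Fin (k+2)) :=
          Finset.mem_erase.mpr ⟨Ne.symm hne0, Finset.mem_univ 0⟩
        rw [hEq'] at h0mem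
        exact (Finset.mem_erase.mp h0mem).1 rfl
    rw [Finset.sum_eq_single_of_mem
      (⟨0, Finset.mem_univ 0⟩ : {a // a ∈ (Finset.univ : Finset (Fin (k+2)))})
      (Finset.mem_attach _ _) hblock]
    have hfilter : ((Finset.univ : Finset (Fin (k+2))).filter (· < (0 : Fin (k+2)))).card = 0 := by
      rw [Finset.card_eq_zero, Finset.filter_eq_empty_iff]
      exact fun _ _ => Fin.not_lt_zero _
    rw [hfilter, pow_zero, one_smul]
    rw [show ((Pi.single (⟨Finset.univ.erase 0, hcard0⟩ : {t : Finset (Fin (k+2)) // t.card = k+1})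
        (LocalizedModule.mk (c * w1 ^ t * r) ⟨w0 ^ (n + t), (Submonoid.mem_powers_iff _ _).mpr ⟨n + t, rfl⟩⟩) : CechC x R (k+1))
        ⟨Finset.univ.erase 0, hcard0⟩)
        = LocalizedModule.mk (c * w1 ^ t * r) ⟨w0 ^ (n + t), (Submonoid.mem_powers_iff _ _).mpr ⟨n + t, rfl⟩⟩
        from Pi.single_eq_same _ _]
    apply smul_injective_of_mem
      (Submonoid.powers (∏ j ∈ (Finset.univ : Finset (Fin (k+2))), x j))
      (w0 ^ (n + t)) ⟨(x 0) ^ (n + t), (Submonoid.mem_powers_iff _ _).mpr ⟨n + t, by rw [hww]; ring⟩⟩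
    show w0 ^ (n + t) • _ = w0 ^ (n + t) • _
    refine Eq.trans (cechLoc_smul_eq _ _ _ _ _) ?_
    rw [LocalizedModule.smul'_mk, LocalizedModule.smul'_mk, LocalizedModule.mk_eq]
    refine ⟨1, ?_⟩
    simp only [Submonoid.smul_def, Submonoid.coe_one, one_smul, smul_eq_mul]
    rw [← hn', hww, hw01]
    linear_combination (-(x 1 ^ n * w1 ^ (n + t) * r)) * hst

  constructor
  intro a b
  have hzero : ∀ u : LocalizedModule p.asIdeal.primeCompl (CechH x R (k + 2)), u = 0 := by
    intro u
    obtain ⟨m, sd, rfl⟩ := exists_mk u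
    obtain ⟨s', hs'⟩ := key m
    rw [show (0 : LocalizedModule p.asIdeal.primeCompl (CechH x R (k+2)))
        = LocalizedModule.mk 0 1 from (LocalizedModule.zero_mk 1).symm]
    rw [LocalizedModule.mk_eq]
    refine ⟨s', ?_⟩
    simp only [Submonoid.smul_def, Submonoid.coe_one, one_smul, smul_zero, hs']
  rw [hzero a, hzero b]

end CMaux

set_option synthInstance.maxHeartbeats 1000000 in
set_option maxHeartbeats 2000000 in
/-- A one-dimensional integral domain is Cohen-Macaulay: every nonempty parameter sequence
has length exactly `1` and consists of a nonzero nonunit, hence is a regular sequence; in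
particular every strong parameter sequence is a regular sequence. -/
theorem stmt_14 {R : Type*} [CommRing R] [IsDomain R] (h1 : ringKrullDim R = 1) :
    (∀ l : List R, IsParamSeq l → l ≠ [] →
        l.length = 1 ∧ ∀ a ∈ l, a ≠ 0 ∧ ¬ IsUnit a) ∧
    (∀ l : List R, IsStrongParamSeq l → IsRegularSeq R l) := by
  have part1 : ∀ l : List R, IsParamSeq l → l ≠ [] →
      l.length = 1 ∧ ∀ a ∈ l, a ≠ 0 ∧ ¬ IsUnit a := by
    intro l hps hne
    obtain ⟨hwp, hspan, hloc⟩ := hps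
    obtain ⟨Mx, hMx, hleM⟩ := Ideal.exists_le_maximal _ hspan
    set p : PrimeSpectrum R := ⟨Mx, hMx.isPrime⟩ with hpdef
    have hlep : Ideal.span {a | a ∈ l} ≤ p.asIdeal := hleM
    have hmemp : ∀ j : Fin l.length, l.get j ∈ p.asIdeal := fun j =>
      hlep (Ideal.subset_span (List.get_mem l j))
    have hlen1 : l.length = 1 := by
      by_contra hlen
      have h2 : 2 ≤ l.length := by
        have := List.length_pos_iff.mpr hne
        omega
      haveI := hloc p hlep
      haveI := CMaux.main_subsingleton h1 l.length h2 l.get p hmemp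
      exact false_of_nontrivial_of_subsingleton
        (LocalizedModule p.asIdeal.primeCompl (CechH l.get R l.length))
    refine ⟨hlen1, ?_⟩
    obtain ⟨a0, rfl⟩ := List.length_eq_one_iff.mp hlen1
    intro a ha
    rw [List.mem_singleton] at ha
    subst ha
    constructor
    · intro ha0
      haveI := hloc p hlep
      haveI : Subsingleton (CechC ([a].get) R ([a].length)) :=
        CMaux.subsingleton_cechC_top _ _ (⟨0, by simp⟩ : Fin ([a].length)) ha0
      haveI := CMaux.subsingleton_locMod p.asIdeal.primeCompl _
        (CMaux.subsingleton_cechH _ _ this)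
      exact false_of_nontrivial_of_subsingleton
        (LocalizedModule p.asIdeal.primeCompl (CechH ([a].get) R ([a].length)))
    · intro hu
      apply hspan
      rw [show {b | b ∈ [a]} = ({a} : Set R) from by ext y; simp]
      exact Ideal.span_singleton_eq_top.mpr hu
  refine ⟨part1, ?_⟩
  intro l hsp
  have hpsl : IsParamSeq l := by
    have := hsp l.length (le_refl _)
    rwa [List.take_length] at this
  rcases l with _ | ⟨a, l'⟩
  · refine ⟨trivial, ?_⟩
    rw [show {b | b ∈ ([] : List R)} = (∅ : Set R) from by ext y; simp]
    rw [Ideal.span_empty]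
    exact bot_ne_top
  · obtain ⟨hlen1, hel⟩ := part1 _ hpsl (by simp)
    have hl' : l' = [] := by
      simp only [List.length_cons] at hlen1
      exact List.length_eq_zero_iff.mp (by omega)
    subst hl'
    obtain ⟨ha0, hau⟩ := hel a (List.mem_singleton.mpr rfl)
    refine ⟨⟨?_, trivial⟩, ?_⟩
    · intro m hm
      rw [smul_eq_mul] at hm
      exact (mul_eq_zero.mp hm).resolve_left ha0
    · intro htop
      apply hau
      rw [show {b | b ∈ [a]} = ({a} : Set R) from by ext y; simp] at htop
      exact Ideal.span_singleton_eq_top.mp htop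

end
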